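/- (Non-confluence of the Frobenius semi-algebra system) The convex DPO rewriting relation ⇒_FS generated by FS1–FS4 is not confluent. Concretely, let G ← 2+2 be the monogamous acyclic interfaced Σ_FS-labelled hypergraph with input nodes a,b, output nodes c,d, internal nodes w1,w2,w3,w4, δ-hyperedges a→(w1,w2) and b→(w3,w4), and μ-hyperedges (w1,w3)→c and (w2,w4)→d. Then there are convex DPO steps G ⇒ H1 (applying FS3) and G ⇒ H2 (applying FS4) such that H1 and H2 admit no further convex DPO steps for any FS rule and are not isomorphic as interfaced hypergraphs; hence there is no K with H1 ⇒* K and H2 ⇒* K. -/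

import Mathlib

namespace SDRT

/-- A directed hypergraph: a set of nodes and, for each hyperedge, an ordered
list of source nodes and an ordered list of target nodes.  A `(k,l)`-hyperedge
is a hyperedge with `k` sources and `l` targets. -/
structure Hyp : Type 1 where
  V : Type
  E : Type
  src : E → List V
  tgt : E → List V

namespace Hyp

/-- The set of pairs `(h, i)` such that `v` is the `i`-th target of the hyperedge `h`.
The in-degree of `v` is the number of such pairs. -/
def inPairs (G : Hyp) (v : G.V) : Set (G.E × ℕ) := {p | (G.tgt p.1)[p.2]? = some v}

/-- The set of pairs `(h, j)` such that `v` is the `j`-th source of the hyperedge `h`.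
The out-degree of `v` is the number of such pairs. -/
def outPairs (G : Hyp) (v : G.V) : Set (G.E × ℕ) := {p | (G.src p.1)[p.2]? = some v}

/-- `v` has in-degree `0`. -/
def inDegZero (G : Hyp) (v : G.V) : Prop := G.inPairs v = ∅

/-- `v` has in-degree `1`. -/
def inDegOne (G : Hyp) (v : G.V) : Prop := ∃! p, p ∈ G.inPairs v

/-- `v` has out-degree `0`. -/
def outDegZero (G : Hyp) (v : G.V) : Prop := G.outPairs v = ∅

/-- `v` has out-degree `1`. -/
def outDegOne (G : Hyp) (v : G.V) : Prop := ∃! p, p ∈ G.outPairs v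

/-- `h'` is a successor of `h` if some node is both a target of `h` and a source of `h'`. -/
def Successor (G : Hyp) (h h' : G.E) : Prop := ∃ v, v ∈ G.tgt h ∧ v ∈ G.src h'

/-- `l` is a path (nonempty sequence of hyperedges, each a successor of the previous)
from the node `v` to the node `v'`: `v` is among the sources of the first hyperedge
and `v'` among the targets of the last one. -/
def PathFrom (G : Hyp) (l : List G.E) (v v' : G.V) : Prop :=
  ∃ hne : l ≠ [], l.Chain' G.Successor ∧ v ∈ G.src (l.head hne) ∧ v' ∈ G.tgt (l.getLast hne)

/-- `l` is a path from the hyperedge `h` to the hyperedge `h'`. -/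
def EdgePath (G : Hyp) (l : List G.E) (h h' : G.E) : Prop :=
  ∃ hne : l ≠ [], l.Chain' G.Successor ∧ l.head hne = h ∧ l.getLast hne = h'

/-- A hypergraph is acyclic if there is no path from a node to itself. -/
def Acyclic (G : Hyp) : Prop := ∀ (v : G.V) (l : List G.E), ¬ G.PathFrom l v v

end Hyp

/-- A subhypergraph: a set of nodes and hyperedges closed under taking the sources
and targets of its hyperedges. -/
structure SubHyp (G : Hyp) where
  nodes : Set G.V
  edges : Set G.E
  src_mem : ∀ e ∈ edges, ∀ v ∈ G.src e, v ∈ nodes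
  tgt_mem : ∀ e ∈ edges, ∀ v ∈ G.tgt e, v ∈ nodes

/-- A subhypergraph `H` of `G` is convex if every path in `G` between nodes of `H`
consists only of hyperedges of `H`. -/
def SubHyp.Convex {G : Hyp} (H : SubHyp G) : Prop :=
  ∀ v ∈ H.nodes, ∀ v' ∈ H.nodes, ∀ l, G.PathFrom l v v' → ∀ e ∈ l, e ∈ H.edges

/-- The hypergraph underlying a subhypergraph. -/
def SubHyp.toHyp {G : Hyp} (H : SubHyp G) : Hyp where
  V := H.nodes
  E := H.edges
  src := fun e => (G.src e.1).pmap (fun v hv => (⟨v, hv⟩ : H.nodes))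
    (fun v hv => H.src_mem e.1 e.2 v hv)
  tgt := fun e => (G.tgt e.1).pmap (fun v hv => (⟨v, hv⟩ : H.nodes))
    (fun v hv => H.tgt_mem e.1 e.2 v hv)

/-- A cospan of hypergraphs with discrete interfaces `m → G ← n`. -/
structure Cospan (m n : Type) : Type 1 where
  G : Hyp
  inp : m → G.V
  out : n → G.V

namespace Cospan

/-- A cospan is monogamous if both legs are injective, nodes in the image of the
input leg have in-degree 0, all other nodes have in-degree 1, nodes in the image
of the output leg have out-degree 0, and all other nodes have out-degree 1. -/
def Monogamous {m n : Type} (A : Cospan m n) : Prop :=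
  Function.Injective A.inp ∧ Function.Injective A.out ∧
  (∀ v ∈ Set.range A.inp, A.G.inDegZero v) ∧
  (∀ v ∉ Set.range A.inp, A.G.inDegOne v) ∧
  (∀ v ∈ Set.range A.out, A.G.outDegZero v) ∧
  (∀ v ∉ Set.range A.out, A.G.outDegOne v)

/-- A cospan is acyclic if its carrier is. -/
def Acyclic {m n : Type} (A : Cospan m n) : Prop := A.G.Acyclic

/-- Composition of cospans by pushout: glue `G` and `H` along the common
interface `n`, identifying `A.out k` with `B.inp k` for every `k : n`. -/
def comp {m n p : Type} (A : Cospan m n) (B : Cospan n p) : Cospan m p where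
  G := { V := Quot (fun x y : A.G.V ⊕ B.G.V =>
                      ∃ k : n, x = Sum.inl (A.out k) ∧ y = Sum.inr (B.inp k))
         E := A.G.E ⊕ B.G.E
         src := Sum.elim (fun e => (A.G.src e).map (fun v => Quot.mk _ (Sum.inl v)))
                         (fun e => (B.G.src e).map (fun v => Quot.mk _ (Sum.inr v)))
         tgt := Sum.elim (fun e => (A.G.tgt e).map (fun v => Quot.mk _ (Sum.inl v)))
                         (fun e => (B.G.tgt e).map (fun v => Quot.mk _ (Sum.inr v))) }
  inp := fun x => Quot.mk _ (Sum.inl (A.inp x))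
  out := fun y => Quot.mk _ (Sum.inr (B.out y))

/-- Monoidal product (tensor) of cospans: disjoint union of the carriers, with
the evident interface maps. -/
def tensor {m₁ n₁ m₂ n₂ : Type} (A : Cospan m₁ n₁) (B : Cospan m₂ n₂) :
    Cospan (m₁ ⊕ m₂) (n₁ ⊕ n₂) where
  G := { V := A.G.V ⊕ B.G.V
         E := A.G.E ⊕ B.G.E
         src := Sum.elim (fun e => (A.G.src e).map Sum.inl) (fun e => (B.G.src e).map Sum.inr)
         tgt := Sum.elim (fun e => (A.G.tgt e).map Sum.inl) (fun e => (B.G.tgt e).map Sum.inr) }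
  inp := Sum.elim (fun x => Sum.inl (A.inp x)) (fun x => Sum.inr (B.inp x))
  out := Sum.elim (fun y => Sum.inl (A.out y)) (fun y => Sum.inr (B.out y))

/-- The identity cospan on `k`: the discrete hypergraph on `k` with identity legs. -/
def idCospan (k : Type) : Cospan k k where
  G := { V := k, E := Empty, src := Empty.elim, tgt := Empty.elim }
  inp := id
  out := id

end Cospan

/-- An isomorphism of cospans: a hypergraph isomorphism of the carriers commuting
with the interface legs. -/
structure CospanIso {m n : Type} (A B : Cospan m n) where
  nodeEquiv : A.G.V ≃ B.G.V
  edgeEquiv : A.G.E ≃ B.G.E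
  src_eq : ∀ e, B.G.src (edgeEquiv e) = (A.G.src e).map nodeEquiv
  tgt_eq : ∀ e, B.G.tgt (edgeEquiv e) = (A.G.tgt e).map nodeEquiv
  inp_eq : ∀ x, nodeEquiv (A.inp x) = B.inp x
  out_eq : ∀ y, nodeEquiv (A.out y) = B.out y

/-- Two cospans are isomorphic if there is an isomorphism between them. -/
def Cospan.Isomorphic {m n : Type} (A B : Cospan m n) : Prop := Nonempty (CospanIso A B)

/-- A homomorphism of hypergraphs: maps nodes to nodes and hyperedges to
hyperedges, preserving the ordered lists of sources and targets. -/
structure HypHom (G H : Hyp) where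
  nodeMap : G.V → H.V
  edgeMap : G.E → H.E
  src_eq : ∀ e, H.src (edgeMap e) = (G.src e).map nodeMap
  tgt_eq : ∀ e, H.tgt (edgeMap e) = (G.tgt e).map nodeMap

/-- The image of a hypergraph homomorphism, as a subhypergraph of the codomain. -/
def HypHom.image {G H : Hyp} (f : HypHom G H) : SubHyp H where
  nodes := Set.range f.nodeMap
  edges := Set.range f.edgeMap
  src_mem := by
    rintro e ⟨e', rfl⟩ v hv
    rw [f.src_eq] at hv
    rcases List.mem_map.mp hv with ⟨w, -, rfl⟩
    exact ⟨w, rfl⟩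
  tgt_mem := by
    rintro e ⟨e', rfl⟩ v hv
    rw [f.tgt_eq] at hv
    rcases List.mem_map.mp hv with ⟨w, -, rfl⟩
    exact ⟨w, rfl⟩


/-! ### Labelled hypergraphs -/

/-- A monoidal signature: a set of operation symbols, each with an arity and a
coarity. -/
structure MonSig : Type 1 where
  ops : Type
  ar : ops → ℕ
  coar : ops → ℕ

/-- A `Σ`-labelled hypergraph: each hyperedge carries a label whose arity and
coarity match the numbers of sources and targets of the hyperedge. -/
structure LHyp (S : MonSig) extends Hyp where
  label : E → S.ops
  src_len : ∀ e, (src e).length = S.ar (label e)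
  tgt_len : ∀ e, (tgt e).length = S.coar (label e)

/-- A homomorphism of `Σ`-labelled hypergraphs. -/
structure LHom {S : MonSig} (G H : LHyp S) where
  nodeMap : G.V → H.V
  edgeMap : G.E → H.E
  src_eq : ∀ e, H.src (edgeMap e) = (G.src e).map nodeMap
  tgt_eq : ∀ e, H.tgt (edgeMap e) = (G.tgt e).map nodeMap
  label_eq : ∀ e, H.label (edgeMap e) = G.label e

/-- Composition (diagrammatic order) of homomorphisms. -/
def LHom.comp {S : MonSig} {G H K : LHyp S} (f : LHom G H) (g : LHom H K) : LHom G K where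
  nodeMap := g.nodeMap ∘ f.nodeMap
  edgeMap := g.edgeMap ∘ f.edgeMap
  src_eq := by intro e; simp only [Function.comp_apply, g.src_eq, f.src_eq, List.map_map]
  tgt_eq := by intro e; simp only [Function.comp_apply, g.tgt_eq, f.tgt_eq, List.map_map]
  label_eq := by intro e; simp only [Function.comp_apply, g.label_eq, f.label_eq]

/-- The underlying homomorphism of unlabelled hypergraphs. -/
def LHom.toHypHom {S : MonSig} {G H : LHyp S} (f : LHom G H) : HypHom G.toHyp H.toHyp :=
  ⟨f.nodeMap, f.edgeMap, f.src_eq, f.tgt_eq⟩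

/-- The discrete `Σ`-labelled hypergraph on a set `I` of nodes (no hyperedges). -/
def discreteLHyp (S : MonSig) (I : Type) : LHyp S where
  V := I
  E := Empty
  src := Empty.elim
  tgt := Empty.elim
  label := fun e => e.elim
  src_len := fun e => e.elim
  tgt_len := fun e => e.elim

/-- A homomorphism out of a discrete hypergraph is just a function on nodes. -/
def discreteHom {S : MonSig} {I : Type} (C : LHyp S) (c : I → C.V) :
    LHom (discreteLHyp S I) C where
  nodeMap := c
  edgeMap := Empty.elim
  src_eq := fun e => e.elim
  tgt_eq := fun e => e.elim
  label_eq := fun e => e.elim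

/-- The square `f ; inA = g ; inB` is a pushout of `Σ`-labelled hypergraphs. -/
def IsPushout {S : MonSig} {X A B P : LHyp S} (f : LHom X A) (g : LHom X B)
    (inA : LHom A P) (inB : LHom B P) : Prop :=
  f.comp inA = g.comp inB ∧
  ∀ (W : LHyp S) (u : LHom A W) (w : LHom B W), f.comp u = g.comp w →
    ∃! t : LHom P W, inA.comp t = u ∧ inB.comp t = w

/-- A cospan of `Σ`-labelled hypergraphs with discrete interfaces. -/
structure LCospan (S : MonSig) (m n : Type) : Type 1 where
  G : LHyp S
  inp : m → G.V
  out : n → G.V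

namespace LCospan

/-- The underlying unlabelled cospan. -/
def toCospan {S : MonSig} {m n : Type} (A : LCospan S m n) : Cospan m n :=
  ⟨A.G.toHyp, A.inp, A.out⟩

def Monogamous {S : MonSig} {m n : Type} (A : LCospan S m n) : Prop := A.toCospan.Monogamous

def Acyclic {S : MonSig} {m n : Type} (A : LCospan S m n) : Prop := A.G.toHyp.Acyclic

/-- Composition of labelled cospans by pushout (gluing along the common interface). -/
def comp {S : MonSig} {m n p : Type} (A : LCospan S m n) (B : LCospan S n p) :
    LCospan S m p where
  G := { V := Quot (fun x y : A.G.V ⊕ B.G.V =>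
                      ∃ k : n, x = Sum.inl (A.out k) ∧ y = Sum.inr (B.inp k))
         E := A.G.E ⊕ B.G.E
         src := Sum.elim (fun e => (A.G.src e).map (fun v => Quot.mk _ (Sum.inl v)))
                         (fun e => (B.G.src e).map (fun v => Quot.mk _ (Sum.inr v)))
         tgt := Sum.elim (fun e => (A.G.tgt e).map (fun v => Quot.mk _ (Sum.inl v)))
                         (fun e => (B.G.tgt e).map (fun v => Quot.mk _ (Sum.inr v)))
         label := Sum.elim A.G.label B.G.label
         src_len := by rintro (e | e) <;> simp [A.G.src_len, B.G.src_len]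
         tgt_len := by rintro (e | e) <;> simp [A.G.tgt_len, B.G.tgt_len] }
  inp := fun x => Quot.mk _ (Sum.inl (A.inp x))
  out := fun y => Quot.mk _ (Sum.inr (B.out y))

/-- Monoidal product (disjoint union) of labelled cospans. -/
def tensor {S : MonSig} {m₁ n₁ m₂ n₂ : Type} (A : LCospan S m₁ n₁) (B : LCospan S m₂ n₂) :
    LCospan S (m₁ ⊕ m₂) (n₁ ⊕ n₂) where
  G := { V := A.G.V ⊕ B.G.V
         E := A.G.E ⊕ B.G.E
         src := Sum.elim (fun e => (A.G.src e).map Sum.inl) (fun e => (B.G.src e).map Sum.inr)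
         tgt := Sum.elim (fun e => (A.G.tgt e).map Sum.inl) (fun e => (B.G.tgt e).map Sum.inr)
         label := Sum.elim A.G.label B.G.label
         src_len := by rintro (e | e) <;> simp [A.G.src_len, B.G.src_len]
         tgt_len := by rintro (e | e) <;> simp [A.G.tgt_len, B.G.tgt_len] }
  inp := Sum.elim (fun x => Sum.inl (A.inp x)) (fun x => Sum.inr (B.inp x))
  out := Sum.elim (fun y => Sum.inl (A.out y)) (fun y => Sum.inr (B.out y))

/-- Reindexing of the interfaces of a cospan along functions. -/
def reind {S : MonSig} {m n m' n' : Type} (A : LCospan S m n) (f : m' → m) (g : n' → n) :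
    LCospan S m' n' :=
  ⟨A.G, A.inp ∘ f, A.out ∘ g⟩

end LCospan

/-- An isomorphism of labelled cospans. -/
structure LCospanIso {S : MonSig} {m n : Type} (A B : LCospan S m n) where
  nodeEquiv : A.G.V ≃ B.G.V
  edgeEquiv : A.G.E ≃ B.G.E
  src_eq : ∀ e, B.G.src (edgeEquiv e) = (A.G.src e).map nodeEquiv
  tgt_eq : ∀ e, B.G.tgt (edgeEquiv e) = (A.G.tgt e).map nodeEquiv
  label_eq : ∀ e, B.G.label (edgeEquiv e) = A.G.label e
  inp_eq : ∀ x, nodeEquiv (A.inp x) = B.inp x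
  out_eq : ∀ y, nodeEquiv (A.out y) = B.out y

/-- `A` is a monogamous acyclic cospan. -/
def MonAcyclic {S : MonSig} {m n : Type} (A : LCospan S m n) : Prop :=
  A.Monogamous ∧ A.Acyclic

/-- `(C, c, g)` is a pushout complement of the mono `f : L → G` along the
interface `i + j → L` of the rule. -/
def IsPushoutComplement {S : MonSig} {i j n m : Type} (L : LCospan S i j) (Gc : LCospan S n m)
    (f : LHom L.G Gc.G) (C : LHyp S) (c : i ⊕ j → C.V) (g : LHom C Gc.G) : Prop :=
  IsPushout (discreteHom L.G (Sum.elim L.inp L.out)) (discreteHom C c) f g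

/-- `(C, c, g)` is a boundary complement: a pushout complement in which `c` is mono
and there are `d₁ : n → C`, `d₂ : m → C` commuting with the interface of `G` such
that the cospan `j + n → C ← m + i` is monogamous. -/
def IsBoundaryComplement {S : MonSig} {i j n m : Type} (L : LCospan S i j) (Gc : LCospan S n m)
    (f : LHom L.G Gc.G) (C : LHyp S) (c : i ⊕ j → C.V) (g : LHom C Gc.G) : Prop :=
  IsPushoutComplement L Gc f C c g ∧ Function.Injective c ∧
  ∃ (d₁ : n → C.V) (d₂ : m → C.V),
    (∀ x, g.nodeMap (d₁ x) = Gc.inp x) ∧ (∀ y, g.nodeMap (d₂ y) = Gc.out y) ∧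
    (LCospan.mk C (Sum.elim (fun y : j => c (Sum.inr y)) d₁)
                  (Sum.elim d₂ (fun x : i => c (Sum.inl x)))).Monogamous

/-- A convex DPO rewriting step from `D ← n+m` to `E ← n+m` using the rule
`L ← i+j → R`: a mono matching `f : L → D` with convex image, and a boundary
(pushout) complement `C` such that pasting `R` back along `i+j` yields `E`,
with all interfaces preserved. -/
def ConvexStep {S : MonSig} {i j n m : Type} (Lr Rr : LCospan S i j)
    (D E : LCospan S n m) : Prop :=
  ∃ (f : LHom Lr.G D.G) (C : LHyp S) (c : i ⊕ j → C.V) (q : n ⊕ m → C.V)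
    (g : LHom C D.G) (r : LHom Rr.G E.G) (h : LHom C E.G),
    Function.Injective f.nodeMap ∧ Function.Injective f.edgeMap ∧
    f.toHypHom.image.Convex ∧
    IsPushout (discreteHom Lr.G (Sum.elim Lr.inp Lr.out)) (discreteHom C c) f g ∧
    IsPushout (discreteHom Rr.G (Sum.elim Rr.inp Rr.out)) (discreteHom C c) r h ∧
    (∀ x, g.nodeMap (q (Sum.inl x)) = D.inp x) ∧
    (∀ y, g.nodeMap (q (Sum.inr y)) = D.out y) ∧
    (∀ x, h.nodeMap (q (Sum.inl x)) = E.inp x) ∧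
    (∀ y, h.nodeMap (q (Sum.inr y)) = E.out y) ∧
    Function.Injective c ∧
    (LCospan.mk C (Sum.elim (fun y : j => c (Sum.inr y)) (fun x : n => q (Sum.inl x)))
                  (Sum.elim (fun y : m => q (Sum.inr y)) (fun x : i => c (Sum.inl x)))).Monogamous

/-! ### The signature of Frobenius semi-algebras and its rewriting rules -/

inductive FSOp : Type
  | mu : FSOp
  | delta : FSOp
deriving DecidableEq

/-- The signature with a multiplication `μ : 2 → 1` and a comultiplication `δ : 1 → 2`. -/
def SFS : MonSig where
  ops := FSOp
  ar := fun o => match o with | .mu => 2 | .delta => 1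
  coar := fun o => match o with | .mu => 1 | .delta => 2

/-- Left-hand side of FS1 (associativity): `μ(a,b) → x`, `μ(x,c) → y`;
inputs `(a,b,c)`, output `y`. -/
def FS1L : LCospan SFS (Fin 3) (Fin 1) where
  G := { V := Fin 5, E := Fin 2
         src := ![[0, 1], [3, 2]], tgt := ![[3], [4]]
         label := fun _ => .mu
         src_len := by decide, tgt_len := by decide }
  inp := ![0, 1, 2]
  out := ![4]

/-- Right-hand side of FS1: `μ(b,c) → z`, `μ(a,z) → y`. -/
def FS1R : LCospan SFS (Fin 3) (Fin 1) where
  G := { V := Fin 5, E := Fin 2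
         src := ![[1, 2], [0, 3]], tgt := ![[3], [4]]
         label := fun _ => .mu
         src_len := by decide, tgt_len := by decide }
  inp := ![0, 1, 2]
  out := ![4]

/-- Left-hand side of FS2 (coassociativity): `δ(a) → (x,c₃)`, `δ(x) → (c₁,c₂)`;
input `a`, outputs `(c₁,c₂,c₃)`. -/
def FS2L : LCospan SFS (Fin 1) (Fin 3) where
  G := { V := Fin 5, E := Fin 2
         src := ![[0], [1]], tgt := ![[1, 4], [2, 3]]
         label := fun _ => .delta
         src_len := by decide, tgt_len := by decide }
  inp := ![0]
  out := ![2, 3, 4]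

/-- Right-hand side of FS2: `δ(a) → (c₁,x)`, `δ(x) → (c₂,c₃)`. -/
def FS2R : LCospan SFS (Fin 1) (Fin 3) where
  G := { V := Fin 5, E := Fin 2
         src := ![[0], [1]], tgt := ![[2, 1], [3, 4]]
         label := fun _ => .delta
         src_len := by decide, tgt_len := by decide }
  inp := ![0]
  out := ![2, 3, 4]

/-- Left-hand side of FS3 (Frobenius): `δ(a) → (c,w)`, `μ(w,b) → d`;
inputs `(a,b)`, outputs `(c,d)`. -/
def FS3L : LCospan SFS (Fin 2) (Fin 2) where
  G := { V := Fin 5, E := Fin 2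
         src := ![[0], [4, 1]], tgt := ![[2, 4], [3]]
         label := ![.delta, .mu]
         src_len := by decide, tgt_len := by decide }
  inp := ![0, 1]
  out := ![2, 3]

/-- Left-hand side of FS4 (Frobenius): `δ(b) → (w,d)`, `μ(a,w) → c`;
inputs `(a,b)`, outputs `(c,d)`. -/
def FS4L : LCospan SFS (Fin 2) (Fin 2) where
  G := { V := Fin 5, E := Fin 2
         src := ![[1], [0, 4]], tgt := ![[4, 3], [2]]
         label := ![.delta, .mu]
         src_len := by decide, tgt_len := by decide }
  inp := ![0, 1]
  out := ![2, 3]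

/-- Common right-hand side of FS3 and FS4: `μ(a,b) → w`, `δ(w) → (c,d)`. -/
def FS34R : LCospan SFS (Fin 2) (Fin 2) where
  G := { V := Fin 5, E := Fin 2
         src := ![[0, 1], [4]], tgt := ![[4], [2, 3]]
         label := ![.mu, .delta]
         src_len := by decide, tgt_len := by decide }
  inp := ![0, 1]
  out := ![2, 3]

/-- A convex DPO step on monogamous acyclic interfaced hypergraphs using FS1 or FS2. -/
def StepFS12 {n m : Type} (D E : LCospan SFS n m) : Prop :=
  MonAcyclic D ∧ MonAcyclic E ∧
    (ConvexStep FS1L FS1R D E ∨ ConvexStep FS2L FS2R D E)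

/-- A convex DPO step on monogamous acyclic interfaced hypergraphs using FS3 or FS4. -/
def StepFS34 {n m : Type} (D E : LCospan SFS n m) : Prop :=
  MonAcyclic D ∧ MonAcyclic E ∧
    (ConvexStep FS3L FS34R D E ∨ ConvexStep FS4L FS34R D E)

/-- A convex DPO step using any of the rules FS1–FS4. -/
def StepFS {n m : Type} (D E : LCospan SFS n m) : Prop :=
  StepFS12 D E ∨ StepFS34 D E

/-! ### Trees, L-weights, and the counting functions for termination -/

/-- The `o`-tree rooted at the node `x`: the set of `o`-labelled hyperedges
admitting a path to `x` consisting solely of `o`-labelled hyperedges. -/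
def muTree {S : MonSig} (o : S.ops) (G : LHyp S) (x : G.V) : Set G.E :=
  {h | G.label h = o ∧ ∃ (l : List G.E) (hne : l ≠ []), l.Chain' G.toHyp.Successor ∧
        (∀ e ∈ l, G.label e = o) ∧ l.head hne = h ∧ x ∈ G.tgt (l.getLast hne)}

/-- The `o`-cotree rooted at the node `x`: the set of `o`-labelled hyperedges
admitting a path from `x` consisting solely of `o`-labelled hyperedges. -/
def deltaTree {S : MonSig} (o : S.ops) (G : LHyp S) (x : G.V) : Set G.E :=
  {h | G.label h = o ∧ ∃ (l : List G.E) (hne : l ≠ []), l.Chain' G.toHyp.Successor ∧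
        (∀ e ∈ l, G.label e = o) ∧ x ∈ G.src (l.head hne) ∧ l.getLast hne = h}

/-- The set whose cardinality is the L-weight `ℓ(h)`: for a `μ`-hyperedge the
`μ`-tree rooted at its first source, for a `δ`-hyperedge the `δ`-tree rooted at
its first target, and empty otherwise. -/
def lset {S : MonSig} (mo de : S.ops) (G : LHyp S) (h : G.E) : Set G.E :=
  {h' | (G.label h = mo ∧ ∃ x, (G.src h)[0]? = some x ∧ h' ∈ muTree mo G x) ∨
        (G.label h = de ∧ ∃ x, (G.tgt h)[0]? = some x ∧ h' ∈ deltaTree de G x)}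

/-- The L-weight `ℓ(h)` of a hyperedge. -/
noncomputable def lweight {S : MonSig} (mo de : S.ops) (G : LHyp S) (h : G.E) : ℕ := (lset mo de G h).ncard

/-- `ℒ(G)`: the sum over all hyperedges of their L-weights. -/
noncomputable def Lw {S : MonSig} (mo de : S.ops) (G : LHyp S) : ℕ := ∑ᶠ h, lweight mo de G h

/-- `𝒟(G)`: the set of pairs `(h, h')` with `h` a `(2,1)`- (i.e. `μ`-) hyperedge
and `h'` a `(1,2)`- (i.e. `δ`-) hyperedge such that no path from `h` to `h'` exists. -/
def Dset (G : LHyp SFS) : Set (G.E × G.E) :=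
  {p | G.label p.1 = .mu ∧ G.label p.2 = .delta ∧ ¬ ∃ l, G.toHyp.EdgePath l p.1 p.2}

/-- `|𝒟(G)|`. -/
noncomputable def Dcard (G : LHyp SFS) : ℕ := (Dset G).ncard

/-- The counterexample hypergraph: inputs `a = 0`, `b = 1`, outputs `c = 2`, `d = 3`,
internal nodes `w₁,…,w₄ = 4,…,7`, with `δ(a) → (w₁,w₂)`, `δ(b) → (w₃,w₄)`,
`μ(w₁,w₃) → c` and `μ(w₂,w₄) → d`. -/
def GFrob : LCospan SFS (Fin 2) (Fin 2) where
  G := { V := Fin 8, E := Fin 4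
         src := ![[0], [1], [4, 6], [5, 7]], tgt := ![[4, 5], [6, 7], [2], [3]]
         label := ![.delta, .delta, .mu, .mu]
         src_len := by decide, tgt_len := by decide }
  inp := ![0, 1]
  out := ![2, 3]



lemma LHom.ext' {S : MonSig} {G H : LHyp S} {f g : LHom G H}
    (hn : f.nodeMap = g.nodeMap) (he : f.edgeMap = g.edgeMap) : f = g := by
  cases f; cases g; cases hn; cases he; rfl

lemma acyclic_of_rank (G : Hyp) (rk : G.V → ℕ)
    (h : ∀ e, ∀ u ∈ G.src e, ∀ w ∈ G.tgt e, rk u < rk w) : G.Acyclic := by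
  have key : ∀ l : List G.E, ∀ hne : l ≠ [], l.Chain' G.Successor →
      ∀ v v', v ∈ G.src (l.head hne) → v' ∈ G.tgt (l.getLast hne) → rk v < rk v' := by
    intro l
    induction l with
    | nil => intro hne; exact absurd rfl hne
    | cons a l ih =>
      intro _ hch v v' hv hv'
      cases l with
      | nil => exact h a v hv v' hv'
      | cons b l' =>
        obtain ⟨⟨x, hx1, hx2⟩, hch'⟩ := List.isChain_cons_cons.mp hch
        have h1 : rk v < rk x := h a v hv x hx1
        have h2 : rk x < rk v' := by
          have := ih (by simp) hch' x v' (by simpa using hx2)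
          apply this
          simpa [List.getLast_cons] using hv'
        exact h1.trans h2
  rintro v l ⟨hne, hch, h1, h2⟩
  exact lt_irrefl _ (key l hne hch v v h1 h2)

lemma monogamous_of {m n : Type} (A : Cospan m n)
    (h1 : Function.Injective A.inp) (h2 : Function.Injective A.out)
    (h3 : ∀ v, (∃ x, A.inp x = v) → ∀ (e : A.G.E) (k : Fin (A.G.tgt e).length),
        (A.G.tgt e).get k ≠ v)
    (h4 : ∀ v, ¬(∃ x, A.inp x = v) → ∃ (e : A.G.E) (k : Fin (A.G.tgt e).length),
        (A.G.tgt e).get k = v ∧ ∀ (e' : A.G.E) (k' : Fin (A.G.tgt e').length),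
          (A.G.tgt e').get k' = v → e' = e ∧ (k' : ℕ) = (k : ℕ))
    (h5 : ∀ v, (∃ x, A.out x = v) → ∀ (e : A.G.E) (k : Fin (A.G.src e).length),
        (A.G.src e).get k ≠ v)
    (h6 : ∀ v, ¬(∃ x, A.out x = v) → ∃ (e : A.G.E) (k : Fin (A.G.src e).length),
        (A.G.src e).get k = v ∧ ∀ (e' : A.G.E) (k' : Fin (A.G.src e').length),
          (A.G.src e').get k' = v → e' = e ∧ (k' : ℕ) = (k : ℕ)) :
    A.Monogamous := by
  refine ⟨h1, h2, ?_, ?_, ?_, ?_⟩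
  · intro v hv
    rw [Set.mem_range] at hv
    apply Set.eq_empty_iff_forall_notMem.mpr
    rintro ⟨e, i⟩ hp
    rw [Hyp.inPairs, Set.mem_setOf_eq, List.getElem?_eq_some_iff] at hp
    obtain ⟨hlt, hget⟩ := hp
    exact h3 v hv e ⟨i, hlt⟩ hget
  · intro v hv
    rw [Set.mem_range] at hv
    obtain ⟨e, k, hk, huniq⟩ := h4 v hv
    refine ⟨(e, (k : ℕ)), ?_, ?_⟩
    · show (A.G.tgt e)[(k : ℕ)]? = some v
      rw [List.getElem?_eq_some_iff]
      exact ⟨k.isLt, hk⟩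
    · rintro ⟨e', i'⟩ hp
      rw [show ((e',i') ∈ A.G.inPairs v) = ((A.G.tgt e')[i']? = some v) from rfl,
        List.getElem?_eq_some_iff] at hp
      obtain ⟨hlt, hg⟩ := hp
      obtain ⟨he, hi⟩ := huniq e' ⟨i', hlt⟩ hg
      exact Prod.ext he hi
  · intro v hv
    rw [Set.mem_range] at hv
    apply Set.eq_empty_iff_forall_notMem.mpr
    rintro ⟨e, i⟩ hp
    rw [Hyp.outPairs, Set.mem_setOf_eq, List.getElem?_eq_some_iff] at hp
    obtain ⟨hlt, hget⟩ := hp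
    exact h5 v hv e ⟨i, hlt⟩ hget
  · intro v hv
    rw [Set.mem_range] at hv
    obtain ⟨e, k, hk, huniq⟩ := h6 v hv
    refine ⟨(e, (k : ℕ)), ?_, ?_⟩
    · show (A.G.src e)[(k : ℕ)]? = some v
      rw [List.getElem?_eq_some_iff]
      exact ⟨k.isLt, hk⟩
    · rintro ⟨e', i'⟩ hp
      rw [show ((e',i') ∈ A.G.outPairs v) = ((A.G.src e')[i']? = some v) from rfl,
        List.getElem?_eq_some_iff] at hp
      obtain ⟨hlt, hg⟩ := hp
      obtain ⟨he, hi⟩ := huniq e' ⟨i', hlt⟩ hg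
      exact Prod.ext he hi

lemma convex_of_small (G : Hyp) (H : SubHyp G)
    (h3 : ∀ a b c : G.E, G.Successor a b → G.Successor b c → False)
    (h1 : ∀ a, ∀ v ∈ G.src a, ∀ v' ∈ G.tgt a, v ∈ H.nodes → v' ∈ H.nodes → a ∈ H.edges)
    (h2 : ∀ a b, G.Successor a b → ∀ v ∈ G.src a, ∀ v' ∈ G.tgt b,
        v ∈ H.nodes → v' ∈ H.nodes → a ∈ H.edges ∧ b ∈ H.edges) :
    H.Convex := by
  rintro v hv v' hv' l ⟨hne, hch, hh, hl⟩ e he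
  rcases l with _ | ⟨a, _ | ⟨b, _ | ⟨c, l'⟩⟩⟩
  · exact absurd rfl hne
  · have he' : e = a := by simpa using he
    subst he'
    exact h1 e v (by simpa using hh) v' (by simpa using hl) hv hv'
  · have hs : G.Successor a b := by
      simpa using List.isChain_cons_cons.mp hch |>.1
    have hab := h2 a b hs v (by simpa using hh) v' (by simpa using hl) hv hv'
    rcases (by simpa using he : e = a ∨ e = b) with he' | he' <;> subst he'
    · exact hab.1
    · exact hab.2
  · obtain ⟨hs1, hch'⟩ := List.isChain_cons_cons.mp hch
    obtain ⟨hs2, _⟩ := List.isChain_cons_cons.mp hch'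
    exact absurd hs2 (fun hs2 => h3 a b c hs1 hs2)

lemma forall_fin2' {P : Fin 2 → Prop} (h0 : P 0) (h1 : P 1) : ∀ e, P e := by
  intro e
  match e with
  | ⟨0, _⟩ => exact h0
  | ⟨1, _⟩ => exact h1


lemma isPushout_of_cover {S : MonSig} {ι : Type} {L C D : LHyp S}
    (ℓ : ι → L.V) (c : ι → C.V) (f : LHom L D) (g : LHom C D)
    (hcomm : ∀ k, f.nodeMap (ℓ k) = g.nodeMap (c k))
    (hfinj : Function.Injective f.nodeMap)
    (hginj : Function.Injective g.nodeMap)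
    (hfeinj : Function.Injective f.edgeMap)
    (hncov : ∀ v : D.V, (∃ a, f.nodeMap a = v) ∨ (∃ b, g.nodeMap b = v))
    (hecov : ∀ e : D.E, (∃ a, f.edgeMap a = e) ∨ (∃ b, g.edgeMap b = e))
    (hgeinj : Function.Injective g.edgeMap)
    (hedis : ∀ a b, f.edgeMap a ≠ g.edgeMap b)
    (hover : ∀ a b, f.nodeMap a = g.nodeMap b → ∃ k, a = ℓ k ∧ b = c k) :
    IsPushout (discreteHom L ℓ) (discreteHom C c) f g := by
  constructor
  · exact LHom.ext' (funext hcomm) (funext fun e => e.elim)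
  · intro W u w huw
    have hk : ∀ k, u.nodeMap (ℓ k) = w.nodeMap (c k) :=
      fun k => congrFun (congrArg LHom.nodeMap huw) k
    classical
    set tN : D.V → W.V := fun v =>
      if h : ∃ b, g.nodeMap b = v then w.nodeMap h.choose
      else u.nodeMap ((hncov v).resolve_right h).choose with htN
    have tNg : ∀ b, tN (g.nodeMap b) = w.nodeMap b := by
      intro b
      have h : ∃ b', g.nodeMap b' = g.nodeMap b := ⟨b, rfl⟩
      simp only [htN, dif_pos h]
      exact congrArg w.nodeMap (hginj h.choose_spec)
    have tNf : ∀ a, tN (f.nodeMap a) = u.nodeMap a := by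
      intro a
      by_cases h : ∃ b, g.nodeMap b = f.nodeMap a
      · simp only [htN, dif_pos h]
        obtain ⟨k, hk1, hk2⟩ := hover a h.choose h.choose_spec.symm
        rw [hk2, hk1, ← hk k]
      · simp only [htN, dif_neg h]
        exact congrArg u.nodeMap (hfinj ((hncov (f.nodeMap a)).resolve_right h).choose_spec)
    set tE : D.E → W.E := fun e =>
      if h : ∃ a, f.edgeMap a = e then u.edgeMap h.choose
      else w.edgeMap ((hecov e).resolve_left h).choose with htE
    have tEf : ∀ a, tE (f.edgeMap a) = u.edgeMap a := by
      intro a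
      have h : ∃ a', f.edgeMap a' = f.edgeMap a := ⟨a, rfl⟩
      simp only [htE, dif_pos h]
      exact congrArg u.edgeMap (hfeinj h.choose_spec)
    have tEg : ∀ b, tE (g.edgeMap b) = w.edgeMap b := by
      intro b
      have h : ¬ ∃ a, f.edgeMap a = g.edgeMap b := by
        rintro ⟨a, ha⟩; exact hedis a b ha
      simp only [htE, dif_neg h]
      exact congrArg w.edgeMap (hgeinj ((hecov (g.edgeMap b)).resolve_left h).choose_spec)
    have hmapf : ∀ (l : List L.V), (l.map f.nodeMap).map tN = l.map u.nodeMap := by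
      intro l; rw [List.map_map]; exact List.map_congr_left (fun x _ => tNf x)
    have hmapg : ∀ (l : List C.V), (l.map g.nodeMap).map tN = l.map w.nodeMap := by
      intro l; rw [List.map_map]; exact List.map_congr_left (fun x _ => tNg x)
    refine ⟨⟨tN, tE, ?_, ?_, ?_⟩, ⟨?_, ?_⟩, ?_⟩
    · intro e
      rcases hecov e with ⟨a, rfl⟩ | ⟨b, rfl⟩
      · rw [tEf, u.src_eq, f.src_eq, hmapf]
      · rw [tEg, w.src_eq, g.src_eq, hmapg]
    · intro e
      rcases hecov e with ⟨a, rfl⟩ | ⟨b, rfl⟩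
      · rw [tEf, u.tgt_eq, f.tgt_eq, hmapf]
      · rw [tEg, w.tgt_eq, g.tgt_eq, hmapg]
    · intro e
      rcases hecov e with ⟨a, rfl⟩ | ⟨b, rfl⟩
      · rw [tEf, u.label_eq, f.label_eq]
      · rw [tEg, w.label_eq, g.label_eq]
    · exact LHom.ext' (funext fun a => tNf a) (funext fun a => tEf a)
    · exact LHom.ext' (funext fun b => tNg b) (funext fun b => tEg b)
    · rintro t' ⟨h1, h2⟩
      apply LHom.ext'
      · funext v
        rcases hncov v with ⟨a, rfl⟩ | ⟨b, rfl⟩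
        · calc t'.nodeMap (f.nodeMap a) = u.nodeMap a := congrFun (congrArg LHom.nodeMap h1) a
            _ = tN (f.nodeMap a) := (tNf a).symm
        · calc t'.nodeMap (g.nodeMap b) = w.nodeMap b := congrFun (congrArg LHom.nodeMap h2) b
            _ = tN (g.nodeMap b) := (tNg b).symm
      · funext e
        rcases hecov e with ⟨a, rfl⟩ | ⟨b, rfl⟩
        · calc t'.edgeMap (f.edgeMap a) = u.edgeMap a := congrFun (congrArg LHom.edgeMap h1) a
            _ = tE (f.edgeMap a) := (tEf a).symm
        · calc t'.edgeMap (g.edgeMap b) = w.edgeMap b := congrFun (congrArg LHom.edgeMap h2) b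
            _ = tE (g.edgeMap b) := (tEg b).symm


/-- Result of applying FS3 to `GFrob`. Nodes: a=0,b=1,c=2,d=3,w1=4,x=5,w3=6,w4=7. -/
abbrev H1 : LCospan SFS (Fin 2) (Fin 2) where
  G := { V := Fin 8, E := Fin 4
         src := ![[1], [4, 6], [0, 7], [5]], tgt := ![[6, 7], [2], [5], [4, 3]]
         label := ![.delta, .mu, .mu, .delta]
         src_len := by decide, tgt_len := by decide }
  inp := ![0, 1]
  out := ![2, 3]

/-- Result of applying FS4 to `GFrob`. Nodes: a=0,b=1,c=2,d=3,w1=4,w2=5,x=6,w4=7. -/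
abbrev H2 : LCospan SFS (Fin 2) (Fin 2) where
  G := { V := Fin 8, E := Fin 4
         src := ![[0], [5, 7], [4, 1], [6]], tgt := ![[4, 5], [3], [6], [2, 7]]
         label := ![.delta, .mu, .mu, .delta]
         src_len := by decide, tgt_len := by decide }
  inp := ![0, 1]
  out := ![2, 3]

/-- Context for the FS3 step: `GFrob` minus node 5 and edges 0, 3. -/
abbrev C1 : LHyp SFS where
  V := Fin 7
  E := Fin 2
  src := ![[1], [4, 5]]
  tgt := ![[5, 6], [2]]
  label := ![.delta, .mu]
  src_len := by decide
  tgt_len := by decide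

/-- Context for the FS4 step: `GFrob` minus node 6 and edges 1, 2. -/
abbrev C2 : LHyp SFS where
  V := Fin 7
  E := Fin 2
  src := ![[0], [5, 6]]
  tgt := ![[4, 5], [3]]
  label := ![.delta, .mu]
  src_len := by decide
  tgt_len := by decide

abbrev f1 : LHom FS3L.G GFrob.G where
  nodeMap := (![0, 7, 4, 3, 5] : _ → Fin 8)
  edgeMap := (![0, 3] : _ → Fin 4)
  src_eq := by exact forall_fin2' rfl rfl
  tgt_eq := by exact forall_fin2' rfl rfl
  label_eq := by exact forall_fin2' rfl rfl

abbrev g1 : LHom C1 GFrob.G where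
  nodeMap := (![0, 1, 2, 3, 4, 6, 7] : _ → Fin 8)
  edgeMap := (![1, 2] : _ → Fin 4)
  src_eq := by exact forall_fin2' rfl rfl
  tgt_eq := by exact forall_fin2' rfl rfl
  label_eq := by exact forall_fin2' rfl rfl

abbrev r1 : LHom FS34R.G H1.G where
  nodeMap := (![0, 7, 4, 3, 5] : _ → Fin 8)
  edgeMap := (![2, 3] : _ → Fin 4)
  src_eq := by exact forall_fin2' rfl rfl
  tgt_eq := by exact forall_fin2' rfl rfl
  label_eq := by exact forall_fin2' rfl rfl

abbrev k1 : LHom C1 H1.G where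
  nodeMap := (![0, 1, 2, 3, 4, 6, 7] : _ → Fin 8)
  edgeMap := (![0, 1] : _ → Fin 4)
  src_eq := by exact forall_fin2' rfl rfl
  tgt_eq := by exact forall_fin2' rfl rfl
  label_eq := by exact forall_fin2' rfl rfl

abbrev f2 : LHom FS4L.G GFrob.G where
  nodeMap := (![4, 1, 2, 7, 6] : _ → Fin 8)
  edgeMap := (![1, 2] : _ → Fin 4)
  src_eq := by exact forall_fin2' rfl rfl
  tgt_eq := by exact forall_fin2' rfl rfl
  label_eq := by exact forall_fin2' rfl rfl

abbrev g2 : LHom C2 GFrob.G where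
  nodeMap := (![0, 1, 2, 3, 4, 5, 7] : _ → Fin 8)
  edgeMap := (![0, 3] : _ → Fin 4)
  src_eq := by exact forall_fin2' rfl rfl
  tgt_eq := by exact forall_fin2' rfl rfl
  label_eq := by exact forall_fin2' rfl rfl

abbrev r2 : LHom FS34R.G H2.G where
  nodeMap := (![4, 1, 2, 7, 6] : _ → Fin 8)
  edgeMap := (![2, 3] : _ → Fin 4)
  src_eq := by exact forall_fin2' rfl rfl
  tgt_eq := by exact forall_fin2' rfl rfl
  label_eq := by exact forall_fin2' rfl rfl

abbrev k2 : LHom C2 H2.G where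
  nodeMap := (![0, 1, 2, 3, 4, 5, 7] : _ → Fin 8)
  edgeMap := (![0, 1] : _ → Fin 4)
  src_eq := by exact forall_fin2' rfl rfl
  tgt_eq := by exact forall_fin2' rfl rfl
  label_eq := by exact forall_fin2' rfl rfl

abbrev c1 : Fin 2 ⊕ Fin 2 → C1.V := Sum.elim (![0, 6] : _ → Fin 7) ((![4, 3] : _ → Fin 7))
abbrev c2 : Fin 2 ⊕ Fin 2 → C2.V := Sum.elim (![4, 1] : _ → Fin 7) ((![2, 6] : _ → Fin 7))
abbrev q0 : Fin 2 ⊕ Fin 2 → C1.V := Sum.elim (![0, 1] : _ → Fin 7) ((![2, 3] : _ → Fin 7))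
abbrev q2 : Fin 2 ⊕ Fin 2 → C2.V := Sum.elim (![0, 1] : _ → Fin 7) ((![2, 3] : _ → Fin 7))

lemma monogamous_of_check {nV nE : ℕ} {m n : Type} {inp : m → Fin nV} {out : n → Fin nV}
    {src tgt : Fin nE → List (Fin nV)} (h : Function.Injective inp ∧ Function.Injective out ∧
  (∀ v, (∃ x, inp x = v) → ∀ (e) (k : Fin (tgt e).length), (tgt e).get k ≠ v) ∧
  (∀ v, ¬(∃ x, inp x = v) → ∃ (e : Fin nE) (k : Fin (tgt e).length), (tgt e).get k = v ∧
     ∀ e' (k' : Fin (tgt e').length), (tgt e').get k' = v → e' = e ∧ (k' : ℕ) = (k : ℕ)) ∧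
  (∀ v, (∃ x, out x = v) → ∀ (e) (k : Fin (src e).length), (src e).get k ≠ v) ∧
  (∀ v, ¬(∃ x, out x = v) → ∃ (e : Fin nE) (k : Fin (src e).length), (src e).get k = v ∧
     ∀ e' (k' : Fin (src e').length), (src e').get k' = v → e' = e ∧ (k' : ℕ) = (k : ℕ))) :
    (Cospan.mk (Hyp.mk (Fin nV) (Fin nE) src tgt) inp out).Monogamous :=
  monogamous_of _ h.1 h.2.1 h.2.2.1 h.2.2.2.1 h.2.2.2.2.1 h.2.2.2.2.2

lemma acyclic_check {nV nE : ℕ} (src tgt : Fin nE → List (Fin nV)) (rk : Fin nV → ℕ)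
    (h : ∀ e, ∀ u ∈ src e, ∀ w ∈ tgt e, rk u < rk w) :
    (Hyp.mk (Fin nV) (Fin nE) src tgt).Acyclic :=
  acyclic_of_rank _ rk h

lemma GFrob_monAcyclic : MonAcyclic GFrob := by
  constructor
  · exact monogamous_of_check (inp := (![0,1] : Fin 2 → Fin 8)) (out := ![2,3])
      (src := ![[0], [1], [4, 6], [5, 7]]) (tgt := ![[4, 5], [6, 7], [2], [3]]) ⟨by decide, by decide, by decide, by decide, by decide, by decide⟩
  · exact acyclic_check ![[0], [1], [4, 6], [5, 7]] ![[4, 5], [6, 7], [2], [3]]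
      ![0, 0, 2, 2, 1, 1, 1, 1] (by decide)

lemma H1_monAcyclic : MonAcyclic H1 := by
  constructor
  · exact monogamous_of_check (inp := (![0,1] : Fin 2 → Fin 8)) (out := ![2,3])
      (src := ![[1], [4, 6], [0, 7], [5]]) (tgt := ![[6, 7], [2], [5], [4, 3]]) ⟨by decide, by decide, by decide, by decide, by decide, by decide⟩
  · exact acyclic_check ![[1], [4, 6], [0, 7], [5]] ![[6, 7], [2], [5], [4, 3]]
      ![0, 0, 4, 3, 3, 2, 1, 1] (by decide)

lemma H2_monAcyclic : MonAcyclic H2 := by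
  constructor
  · exact monogamous_of_check (inp := (![0,1] : Fin 2 → Fin 8)) (out := ![2,3])
      (src := ![[0], [5, 7], [4, 1], [6]]) (tgt := ![[4, 5], [3], [6], [2, 7]]) ⟨by decide, by decide, by decide, by decide, by decide, by decide⟩
  · exact acyclic_check ![[0], [5, 7], [4, 1], [6]] ![[4, 5], [3], [6], [2, 7]]
      ![0, 0, 3, 4, 1, 1, 2, 3] (by decide)
section Instances

instance : DecidableEq GFrob.G.V := inferInstanceAs (DecidableEq (Fin 8))
instance : Fintype GFrob.G.V := inferInstanceAs (Fintype (Fin 8))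
instance : DecidableEq GFrob.G.E := inferInstanceAs (DecidableEq (Fin 4))
instance : Fintype GFrob.G.E := inferInstanceAs (Fintype (Fin 4))
instance : DecidableEq GFrob.G.toHyp.V := inferInstanceAs (DecidableEq (Fin 8))
instance : Fintype GFrob.G.toHyp.V := inferInstanceAs (Fintype (Fin 8))
instance : DecidableEq GFrob.G.toHyp.E := inferInstanceAs (DecidableEq (Fin 4))
instance : Fintype GFrob.G.toHyp.E := inferInstanceAs (Fintype (Fin 4))

instance : DecidableEq H1.G.V := inferInstanceAs (DecidableEq (Fin 8))
instance : Fintype H1.G.V := inferInstanceAs (Fintype (Fin 8))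
instance : DecidableEq H1.G.E := inferInstanceAs (DecidableEq (Fin 4))
instance : Fintype H1.G.E := inferInstanceAs (Fintype (Fin 4))
instance : DecidableEq H1.G.toHyp.V := inferInstanceAs (DecidableEq (Fin 8))
instance : Fintype H1.G.toHyp.V := inferInstanceAs (Fintype (Fin 8))
instance : DecidableEq H1.G.toHyp.E := inferInstanceAs (DecidableEq (Fin 4))
instance : Fintype H1.G.toHyp.E := inferInstanceAs (Fintype (Fin 4))

instance : DecidableEq H2.G.V := inferInstanceAs (DecidableEq (Fin 8))
instance : Fintype H2.G.V := inferInstanceAs (Fintype (Fin 8))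
instance : DecidableEq H2.G.E := inferInstanceAs (DecidableEq (Fin 4))
instance : Fintype H2.G.E := inferInstanceAs (Fintype (Fin 4))
instance : DecidableEq H2.G.toHyp.V := inferInstanceAs (DecidableEq (Fin 8))
instance : Fintype H2.G.toHyp.V := inferInstanceAs (Fintype (Fin 8))
instance : DecidableEq H2.G.toHyp.E := inferInstanceAs (DecidableEq (Fin 4))
instance : Fintype H2.G.toHyp.E := inferInstanceAs (Fintype (Fin 4))

instance : DecidableEq C1.V := inferInstanceAs (DecidableEq (Fin 7))
instance : Fintype C1.V := inferInstanceAs (Fintype (Fin 7))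
instance : DecidableEq C1.E := inferInstanceAs (DecidableEq (Fin 2))
instance : Fintype C1.E := inferInstanceAs (Fintype (Fin 2))
instance : DecidableEq C2.V := inferInstanceAs (DecidableEq (Fin 7))
instance : Fintype C2.V := inferInstanceAs (Fintype (Fin 7))
instance : DecidableEq C2.E := inferInstanceAs (DecidableEq (Fin 2))
instance : Fintype C2.E := inferInstanceAs (Fintype (Fin 2))

instance : DecidableEq FS1L.G.V := inferInstanceAs (DecidableEq (Fin 5))
instance : Fintype FS1L.G.V := inferInstanceAs (Fintype (Fin 5))
instance : DecidableEq FS1L.G.E := inferInstanceAs (DecidableEq (Fin 2))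
instance : Fintype FS1L.G.E := inferInstanceAs (Fintype (Fin 2))
instance : DecidableEq FS2L.G.V := inferInstanceAs (DecidableEq (Fin 5))
instance : Fintype FS2L.G.V := inferInstanceAs (Fintype (Fin 5))
instance : DecidableEq FS2L.G.E := inferInstanceAs (DecidableEq (Fin 2))
instance : Fintype FS2L.G.E := inferInstanceAs (Fintype (Fin 2))
instance : DecidableEq FS3L.G.V := inferInstanceAs (DecidableEq (Fin 5))
instance : Fintype FS3L.G.V := inferInstanceAs (Fintype (Fin 5))
instance : DecidableEq FS3L.G.E := inferInstanceAs (DecidableEq (Fin 2))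
instance : Fintype FS3L.G.E := inferInstanceAs (Fintype (Fin 2))
instance : DecidableEq FS4L.G.V := inferInstanceAs (DecidableEq (Fin 5))
instance : Fintype FS4L.G.V := inferInstanceAs (Fintype (Fin 5))
instance : DecidableEq FS4L.G.E := inferInstanceAs (DecidableEq (Fin 2))
instance : Fintype FS4L.G.E := inferInstanceAs (Fintype (Fin 2))
instance : DecidableEq FS34R.G.V := inferInstanceAs (DecidableEq (Fin 5))
instance : Fintype FS34R.G.V := inferInstanceAs (Fintype (Fin 5))
instance : DecidableEq FS34R.G.E := inferInstanceAs (DecidableEq (Fin 2))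
instance : Fintype FS34R.G.E := inferInstanceAs (Fintype (Fin 2))

instance (a : Fin 4) (v : Fin 8) : Decidable (v ∈ GFrob.G.tgt a) :=
  decidable_of_iff (v ∈ @id (List (Fin 8)) (GFrob.G.tgt a)) Iff.rfl
instance (a : Fin 4) (v : Fin 8) : Decidable (v ∈ GFrob.G.src a) :=
  decidable_of_iff (v ∈ @id (List (Fin 8)) (GFrob.G.src a)) Iff.rfl
instance (x : Fin 8) (v : GFrob.G.V) : Decidable (x = v) := decEq (α := Fin 8) x v

end Instances

lemma step1 : ConvexStep FS3L FS34R GFrob H1 := by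
  refine ⟨f1, C1, c1, q0, g1, r1, k1, ?_, ?_, ?_, ?_, ?_, ?_, ?_, ?_, ?_, ?_, ?_⟩
  · exact (by decide : Function.Injective (![0,7,4,3,5] : Fin 5 → Fin 8))
  · exact (by decide : Function.Injective (![0,3] : Fin 2 → Fin 4))
  · refine convex_of_small _ _ ?_ ?_ ?_
    · exact (by decide : ∀ a b c : Fin 4,
        (∃ v : Fin 8, v ∈ GFrob.G.tgt a ∧ v ∈ GFrob.G.src b) →
        (∃ v : Fin 8, v ∈ GFrob.G.tgt b ∧ v ∈ GFrob.G.src c) → False)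
    · exact (by decide : ∀ a : Fin 4, ∀ v ∈ GFrob.G.src a, ∀ v' ∈ GFrob.G.tgt a,
        (∃ y : Fin 5, (![0,7,4,3,5] : Fin 5 → Fin 8) y = v) →
        (∃ y : Fin 5, (![0,7,4,3,5] : Fin 5 → Fin 8) y = v') →
        (∃ y : Fin 2, (![0,3] : Fin 2 → Fin 4) y = a))
    · exact (by decide : ∀ a b : Fin 4,
        (∃ v : Fin 8, v ∈ GFrob.G.tgt a ∧ v ∈ GFrob.G.src b) →
        ∀ v ∈ GFrob.G.src a, ∀ v' ∈ GFrob.G.tgt b,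
        (∃ y : Fin 5, (![0,7,4,3,5] : Fin 5 → Fin 8) y = v) →
        (∃ y : Fin 5, (![0,7,4,3,5] : Fin 5 → Fin 8) y = v') →
        (∃ y : Fin 2, (![0,3] : Fin 2 → Fin 4) y = a) ∧
        (∃ y : Fin 2, (![0,3] : Fin 2 → Fin 4) y = b))
  · apply isPushout_of_cover <;> decide
  · apply isPushout_of_cover <;> decide
  · decide
  · decide
  · decide
  · decide
  · decide
  · exact monogamous_of_check ⟨by decide, by decide, by decide, by decide, by decide, by decide⟩

lemma step2 : ConvexStep FS4L FS34R GFrob H2 := by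
  refine ⟨f2, C2, c2, q2, g2, r2, k2, ?_, ?_, ?_, ?_, ?_, ?_, ?_, ?_, ?_, ?_, ?_⟩
  · exact (by decide : Function.Injective (![4,1,2,7,6] : Fin 5 → Fin 8))
  · exact (by decide : Function.Injective (![1,2] : Fin 2 → Fin 4))
  · refine convex_of_small _ _ ?_ ?_ ?_
    · exact (by decide : ∀ a b c : Fin 4,
        (∃ v : Fin 8, v ∈ GFrob.G.tgt a ∧ v ∈ GFrob.G.src b) →
        (∃ v : Fin 8, v ∈ GFrob.G.tgt b ∧ v ∈ GFrob.G.src c) → False)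
    · exact (by decide : ∀ a : Fin 4, ∀ v ∈ GFrob.G.src a, ∀ v' ∈ GFrob.G.tgt a,
        (∃ y : Fin 5, (![4,1,2,7,6] : Fin 5 → Fin 8) y = v) →
        (∃ y : Fin 5, (![4,1,2,7,6] : Fin 5 → Fin 8) y = v') →
        (∃ y : Fin 2, (![1,2] : Fin 2 → Fin 4) y = a))
    · exact (by decide : ∀ a b : Fin 4,
        (∃ v : Fin 8, v ∈ GFrob.G.tgt a ∧ v ∈ GFrob.G.src b) →
        ∀ v ∈ GFrob.G.src a, ∀ v' ∈ GFrob.G.tgt b,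
        (∃ y : Fin 5, (![4,1,2,7,6] : Fin 5 → Fin 8) y = v) →
        (∃ y : Fin 5, (![4,1,2,7,6] : Fin 5 → Fin 8) y = v') →
        (∃ y : Fin 2, (![1,2] : Fin 2 → Fin 4) y = a) ∧
        (∃ y : Fin 2, (![1,2] : Fin 2 → Fin 4) y = b))
  · apply isPushout_of_cover <;> decide
  · apply isPushout_of_cover <;> decide
  · decide
  · decide
  · decide
  · decide
  · decide
  · exact monogamous_of_check ⟨by decide, by decide, by decide, by decide, by decide, by decide⟩
lemma no_FS1_H1 (K : LCospan SFS (Fin 2) (Fin 2)) : ¬ ConvexStep FS1L FS1R H1 K := by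
  rintro ⟨f, C, c, q, g, r, h, hfn, hfe, hconv, _, _, _, _, _, _, _, _⟩
  obtain ⟨a, ha⟩ : ∃ a, f.edgeMap ((0 : Fin 2)) = a := ⟨_, rfl⟩
  obtain ⟨b, hb⟩ : ∃ b, f.edgeMap ((1 : Fin 2)) = b := ⟨_, rfl⟩
  have hl0 := f.label_eq ((0 : Fin 2))
  have hl1 := f.label_eq ((1 : Fin 2))
  have ht0 := f.tgt_eq ((0 : Fin 2))
  have hs1 := f.src_eq ((1 : Fin 2))
  rw [ha] at hl0 ht0
  rw [hb] at hl1 hs1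
  fin_cases a <;> fin_cases b <;>
    simp [H1, FS1L] at hl0 hl1 ht0 hs1 <;>
  first
      | exact hl0
      | exact hl1
      | exact absurd (hfe (ha.trans hb.symm)) (by decide)
      | exact absurd (ht0.trans hs1.symm) (by decide)
      | exact absurd (ht0.trans hs1.1.symm) (by decide)
      | exact absurd (ht0.1.trans hs1.symm) (by decide)
      | exact absurd (ht0.1.trans hs1.2.symm) (by decide)
      | exact absurd (ht0.2.trans hs1.1.symm) (by decide)
lemma no_FS2_H1 (K : LCospan SFS (Fin 2) (Fin 2)) : ¬ ConvexStep FS2L FS2R H1 K := by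
  rintro ⟨f, C, c, q, g, r, h, hfn, hfe, hconv, _, _, _, _, _, _, _, _⟩
  obtain ⟨a, ha⟩ : ∃ a, f.edgeMap ((0 : Fin 2)) = a := ⟨_, rfl⟩
  obtain ⟨b, hb⟩ : ∃ b, f.edgeMap ((1 : Fin 2)) = b := ⟨_, rfl⟩
  have hl0 := f.label_eq ((0 : Fin 2))
  have hl1 := f.label_eq ((1 : Fin 2))
  have ht0 := f.tgt_eq ((0 : Fin 2))
  have hs1 := f.src_eq ((1 : Fin 2))
  rw [ha] at hl0 ht0
  rw [hb] at hl1 hs1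
  fin_cases a <;> fin_cases b <;>
    simp [H1, FS2L] at hl0 hl1 ht0 hs1 <;>
  first
      | exact hl0
      | exact hl1
      | exact absurd (hfe (ha.trans hb.symm)) (by decide)
      | exact absurd (ht0.trans hs1.symm) (by decide)
      | exact absurd (ht0.trans hs1.1.symm) (by decide)
      | exact absurd (ht0.1.trans hs1.symm) (by decide)
      | exact absurd (ht0.1.trans hs1.2.symm) (by decide)
      | exact absurd (ht0.2.trans hs1.1.symm) (by decide)
lemma no_FS3_H1 (K : LCospan SFS (Fin 2) (Fin 2)) : ¬ ConvexStep FS3L FS34R H1 K := by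
  rintro ⟨f, C, c, q, g, r, h, hfn, hfe, hconv, _, _, _, _, _, _, _, _⟩
  obtain ⟨a, ha⟩ : ∃ a, f.edgeMap ((0 : Fin 2)) = a := ⟨_, rfl⟩
  obtain ⟨b, hb⟩ : ∃ b, f.edgeMap ((1 : Fin 2)) = b := ⟨_, rfl⟩
  have hl0 := f.label_eq ((0 : Fin 2))
  have hl1 := f.label_eq ((1 : Fin 2))
  have ht0 := f.tgt_eq ((0 : Fin 2))
  have hs1 := f.src_eq ((1 : Fin 2))
  rw [ha] at hl0 ht0
  rw [hb] at hl1 hs1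
  fin_cases a <;> fin_cases b <;>
    simp [H1, FS3L] at hl0 hl1 ht0 hs1 <;>
  first
      | exact hl0
      | exact hl1
      | exact absurd (hfe (ha.trans hb.symm)) (by decide)
      | exact absurd (ht0.trans hs1.symm) (by decide)
      | exact absurd (ht0.trans hs1.1.symm) (by decide)
      | exact absurd (ht0.1.trans hs1.symm) (by decide)
      | exact absurd (ht0.1.trans hs1.2.symm) (by decide)
      | exact absurd (ht0.2.trans hs1.1.symm) (by decide)
lemma no_FS4_H1 (K : LCospan SFS (Fin 2) (Fin 2)) : ¬ ConvexStep FS4L FS34R H1 K := by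
  rintro ⟨f, C, c, q, g, r, h, hfn, hfe, hconv, _, _, _, _, _, _, _, _⟩
  obtain ⟨a, ha⟩ : ∃ a, f.edgeMap ((0 : Fin 2)) = a := ⟨_, rfl⟩
  obtain ⟨b, hb⟩ : ∃ b, f.edgeMap ((1 : Fin 2)) = b := ⟨_, rfl⟩
  have hl0 := f.label_eq ((0 : Fin 2))
  have hl1 := f.label_eq ((1 : Fin 2))
  have ht0 := f.tgt_eq ((0 : Fin 2))
  have hs1 := f.src_eq ((1 : Fin 2))
  rw [ha] at hl0 ht0
  rw [hb] at hl1 hs1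
  fin_cases a <;> fin_cases b <;>
    simp [H1, FS4L] at hl0 hl1 ht0 hs1 <;>
  first
      | exact hl0
      | exact hl1
      | exact absurd (hfe (ha.trans hb.symm)) (by decide)
      | exact absurd (ht0.trans hs1.symm) (by decide)
      | exact absurd (ht0.trans hs1.1.symm) (by decide)
      | exact absurd (ht0.1.trans hs1.symm) (by decide)
      | exact absurd (ht0.1.trans hs1.2.symm) (by decide)
      | exact absurd (ht0.2.trans hs1.1.symm) (by decide)
      | (have hpath : H1.G.toHyp.PathFrom [2, 3] (f.nodeMap ((3 : Fin 5))) (f.nodeMap ((0 : Fin 5))) := by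
           refine ⟨by simp, List.isChain_pair.mpr ⟨(5 : Fin 8), by decide, by decide⟩, ?_, ?_⟩
           · rw [← ht0.2]; decide
           · rw [← hs1.1]; decide
         have hmem := hconv (f.nodeMap ((3 : Fin 5))) ⟨(3 : Fin 5), rfl⟩
           (f.nodeMap ((0 : Fin 5))) ⟨(0 : Fin 5), rfl⟩ [2, 3] hpath 2 (by decide)
         obtain ⟨y, hy⟩ := hmem
         rw [show f.toHypHom.edgeMap = f.edgeMap from rfl] at hy
         fin_cases y <;> simp_all)
lemma no_FS1_H2 (K : LCospan SFS (Fin 2) (Fin 2)) : ¬ ConvexStep FS1L FS1R H2 K := by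
  rintro ⟨f, C, c, q, g, r, h, hfn, hfe, hconv, _, _, _, _, _, _, _, _⟩
  obtain ⟨a, ha⟩ : ∃ a, f.edgeMap ((0 : Fin 2)) = a := ⟨_, rfl⟩
  obtain ⟨b, hb⟩ : ∃ b, f.edgeMap ((1 : Fin 2)) = b := ⟨_, rfl⟩
  have hl0 := f.label_eq ((0 : Fin 2))
  have hl1 := f.label_eq ((1 : Fin 2))
  have ht0 := f.tgt_eq ((0 : Fin 2))
  have hs1 := f.src_eq ((1 : Fin 2))
  rw [ha] at hl0 ht0
  rw [hb] at hl1 hs1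
  fin_cases a <;> fin_cases b <;>
    simp [H2, FS1L] at hl0 hl1 ht0 hs1 <;>
  first
      | exact hl0
      | exact hl1
      | exact absurd (hfe (ha.trans hb.symm)) (by decide)
      | exact absurd (ht0.trans hs1.symm) (by decide)
      | exact absurd (ht0.trans hs1.1.symm) (by decide)
      | exact absurd (ht0.1.trans hs1.symm) (by decide)
      | exact absurd (ht0.1.trans hs1.2.symm) (by decide)
      | exact absurd (ht0.2.trans hs1.1.symm) (by decide)
lemma no_FS2_H2 (K : LCospan SFS (Fin 2) (Fin 2)) : ¬ ConvexStep FS2L FS2R H2 K := by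
  rintro ⟨f, C, c, q, g, r, h, hfn, hfe, hconv, _, _, _, _, _, _, _, _⟩
  obtain ⟨a, ha⟩ : ∃ a, f.edgeMap ((0 : Fin 2)) = a := ⟨_, rfl⟩
  obtain ⟨b, hb⟩ : ∃ b, f.edgeMap ((1 : Fin 2)) = b := ⟨_, rfl⟩
  have hl0 := f.label_eq ((0 : Fin 2))
  have hl1 := f.label_eq ((1 : Fin 2))
  have ht0 := f.tgt_eq ((0 : Fin 2))
  have hs1 := f.src_eq ((1 : Fin 2))
  rw [ha] at hl0 ht0
  rw [hb] at hl1 hs1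
  fin_cases a <;> fin_cases b <;>
    simp [H2, FS2L] at hl0 hl1 ht0 hs1 <;>
  first
      | exact hl0
      | exact hl1
      | exact absurd (hfe (ha.trans hb.symm)) (by decide)
      | exact absurd (ht0.trans hs1.symm) (by decide)
      | exact absurd (ht0.trans hs1.1.symm) (by decide)
      | exact absurd (ht0.1.trans hs1.symm) (by decide)
      | exact absurd (ht0.1.trans hs1.2.symm) (by decide)
      | exact absurd (ht0.2.trans hs1.1.symm) (by decide)
lemma no_FS3_H2 (K : LCospan SFS (Fin 2) (Fin 2)) : ¬ ConvexStep FS3L FS34R H2 K := by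
  rintro ⟨f, C, c, q, g, r, h, hfn, hfe, hconv, _, _, _, _, _, _, _, _⟩
  obtain ⟨a, ha⟩ : ∃ a, f.edgeMap ((0 : Fin 2)) = a := ⟨_, rfl⟩
  obtain ⟨b, hb⟩ : ∃ b, f.edgeMap ((1 : Fin 2)) = b := ⟨_, rfl⟩
  have hl0 := f.label_eq ((0 : Fin 2))
  have hl1 := f.label_eq ((1 : Fin 2))
  have ht0 := f.tgt_eq ((0 : Fin 2))
  have hs1 := f.src_eq ((1 : Fin 2))
  rw [ha] at hl0 ht0
  rw [hb] at hl1 hs1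
  fin_cases a <;> fin_cases b <;>
    simp [H2, FS3L] at hl0 hl1 ht0 hs1 <;>
  first
      | exact hl0
      | exact hl1
      | exact absurd (hfe (ha.trans hb.symm)) (by decide)
      | exact absurd (ht0.trans hs1.symm) (by decide)
      | exact absurd (ht0.trans hs1.1.symm) (by decide)
      | exact absurd (ht0.1.trans hs1.symm) (by decide)
      | exact absurd (ht0.1.trans hs1.2.symm) (by decide)
      | exact absurd (ht0.2.trans hs1.1.symm) (by decide)
      | (have hpath : H2.G.toHyp.PathFrom [2, 3] (f.nodeMap ((2 : Fin 5))) (f.nodeMap ((1 : Fin 5))) := by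
           refine ⟨by simp, List.isChain_pair.mpr ⟨(6 : Fin 8), by decide, by decide⟩, ?_, ?_⟩
           · rw [← ht0.1]; decide
           · rw [← hs1.2]; decide
         have hmem := hconv (f.nodeMap ((2 : Fin 5))) ⟨(2 : Fin 5), rfl⟩
           (f.nodeMap ((1 : Fin 5))) ⟨(1 : Fin 5), rfl⟩ [2, 3] hpath 2 (by decide)
         obtain ⟨y, hy⟩ := hmem
         rw [show f.toHypHom.edgeMap = f.edgeMap from rfl] at hy
         fin_cases y <;> simp_all)
lemma no_FS4_H2 (K : LCospan SFS (Fin 2) (Fin 2)) : ¬ ConvexStep FS4L FS34R H2 K := by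
  rintro ⟨f, C, c, q, g, r, h, hfn, hfe, hconv, _, _, _, _, _, _, _, _⟩
  obtain ⟨a, ha⟩ : ∃ a, f.edgeMap ((0 : Fin 2)) = a := ⟨_, rfl⟩
  obtain ⟨b, hb⟩ : ∃ b, f.edgeMap ((1 : Fin 2)) = b := ⟨_, rfl⟩
  have hl0 := f.label_eq ((0 : Fin 2))
  have hl1 := f.label_eq ((1 : Fin 2))
  have ht0 := f.tgt_eq ((0 : Fin 2))
  have hs1 := f.src_eq ((1 : Fin 2))
  rw [ha] at hl0 ht0
  rw [hb] at hl1 hs1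
  fin_cases a <;> fin_cases b <;>
    simp [H2, FS4L] at hl0 hl1 ht0 hs1 <;>
  first
      | exact hl0
      | exact hl1
      | exact absurd (hfe (ha.trans hb.symm)) (by decide)
      | exact absurd (ht0.trans hs1.symm) (by decide)
      | exact absurd (ht0.trans hs1.1.symm) (by decide)
      | exact absurd (ht0.1.trans hs1.symm) (by decide)
      | exact absurd (ht0.1.trans hs1.2.symm) (by decide)
      | exact absurd (ht0.2.trans hs1.1.symm) (by decide)
lemma no_iso : IsEmpty (LCospanIso H1 H2) := by
  constructor
  intro φ
  have h0 : φ.nodeEquiv ((0 : Fin 8)) = (0 : Fin 8) := φ.inp_eq 0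
  obtain ⟨a, ha⟩ : ∃ a, φ.edgeEquiv ((2 : Fin 4)) = a := ⟨_, rfl⟩
  have hl := φ.label_eq ((2 : Fin 4))
  have hs := φ.src_eq ((2 : Fin 4))
  rw [ha] at hl hs
  fin_cases a <;> simp [H1, H2] at hl hs <;>
    first
      | exact hl
      | exact absurd (hs.1.trans h0) (by decide)

lemma noStep_H1 : ∀ K, ¬ StepFS H1 K := by
  rintro K (⟨-, -, hs | hs⟩ | ⟨-, -, hs | hs⟩)
  · exact no_FS1_H1 K hs
  · exact no_FS2_H1 K hs
  · exact no_FS3_H1 K hs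
  · exact no_FS4_H1 K hs

lemma noStep_H2 : ∀ K, ¬ StepFS H2 K := by
  rintro K (⟨-, -, hs | hs⟩ | ⟨-, -, hs | hs⟩)
  · exact no_FS1_H2 K hs
  · exact no_FS2_H2 K hs
  · exact no_FS3_H2 K hs
  · exact no_FS4_H2 K hs

/-- **Non-confluence of the Frobenius semi-algebra system.**
`GFrob` is monogamous acyclic and admits convex DPO steps `GFrob ⇒ H₁` (by FS3)
and `GFrob ⇒ H₂` (by FS4) such that `H₁`, `H₂` admit no further convex DPO steps
for any FS rule, are not isomorphic as interfaced hypergraphs, and there is no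
`K` with `H₁ ⇒* K` and `H₂ ⇒* K`. -/
theorem FS_not_confluent :
    MonAcyclic GFrob ∧
    ∃ H₁ H₂ : LCospan SFS (Fin 2) (Fin 2),
      MonAcyclic H₁ ∧ MonAcyclic H₂ ∧
      ConvexStep FS3L FS34R GFrob H₁ ∧
      ConvexStep FS4L FS34R GFrob H₂ ∧
      (∀ K, ¬ StepFS H₁ K) ∧ (∀ K, ¬ StepFS H₂ K) ∧
      IsEmpty (LCospanIso H₁ H₂) ∧
      ¬ ∃ K, Relation.ReflTransGen StepFS H₁ K ∧ Relation.ReflTransGen StepFS H₂ K := by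
  refine ⟨GFrob_monAcyclic, H1, H2, H1_monAcyclic, H2_monAcyclic, step1, step2,
    noStep_H1, noStep_H2, no_iso, ?_⟩
  rintro ⟨K, hK1, hK2⟩
  have e1 : K = H1 := by
    rcases hK1.cases_head with h | ⟨c, hc, -⟩
    · exact h.symm
    · exact absurd hc (noStep_H1 c)
  have e2 : K = H2 := by
    rcases hK2.cases_head with h | ⟨c, hc, -⟩
    · exact h.symm
    · exact absurd hc (noStep_H2 c)
  have h12 : H1 = H2 := e1.symm.trans e2
  have idIso : LCospanIso H1 H1 :=
    ⟨Equiv.refl _, Equiv.refl _, by simp, by simp, fun _ => rfl, fun _ => rfl, fun _ => rfl⟩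
  exact no_iso.false (h12 ▸ idIso)

end SDRT
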